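/- arXiv:1408.0313 — 3 statements merged into one kernel-verified Lean document; each statement's English description precedes it below -/
import Mathlib

section
/- Let B ∈ (ℝ ∪ {−∞})^{n×n} satisfy Tr(B) ≤ 𝟙, let p ∈ (ℝ ∪ {−∞})ⁿ be a nonzero vector, let q, h ∈ ℝⁿ be regular vectors, and let g ∈ (ℝ ∪ {−∞})ⁿ satisfy h⁻ B* g ≤ 𝟙. Set θ = (q⁻ B* p)^{1/2} ⊕ h⁻ B* p ⊕ q⁻ B* g. Then the minimum of x⁻ p ⊕ q⁻ x over all regular vectors x ∈ ℝⁿ satisfying B x ⊕ g ≤ x and x ≤ h equals θ, and a regular vector x satisfying these constraints attains this minimum if and only if x = B* u for some vector u with g ⊕ θ⁻¹ p ≤ u ≤ ((h⁻ ⊕ θ⁻¹ q⁻) B*)⁻, where θ⁻¹ = −θ. -/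
open Finset

noncomputable section

namespace MaxPlus

/-- Max-plus multiplicative inverse: `-a` for real `a`, `⊥` for `⊥`. -/
def tinv (a : WithBot ℝ) : WithBot ℝ := WithBot.map (fun r => -r) a

/-- Max-plus rational power `a^(1/k) = a / k`. -/
def trt (a : WithBot ℝ) (k : ℕ) : WithBot ℝ := WithBot.map (fun r => r / (k : ℝ)) a

/-- A vector is regular if it has no `⊥` (= -∞) entries. -/
def Reg {n : ℕ} (x : Fin n → WithBot ℝ) : Prop := ∀ i, x i ≠ ⊥

/-- `cdot q x = q⁻ x`, the max-plus product of the conjugate row vector `q⁻` with `x`. -/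
def cdot {n : ℕ} (q x : Fin n → WithBot ℝ) : WithBot ℝ :=
  Finset.univ.sup fun i => tinv (q i) + x i

/-- Max-plus matrix-vector product. -/
def mulVec {m n : ℕ} (A : Matrix (Fin m) (Fin n) (WithBot ℝ)) (x : Fin n → WithBot ℝ) :
    Fin m → WithBot ℝ := fun i => Finset.univ.sup fun j => A i j + x j

/-- Max-plus matrix product. -/
def tmul {l m n : ℕ} (A : Matrix (Fin l) (Fin m) (WithBot ℝ))
    (B : Matrix (Fin m) (Fin n) (WithBot ℝ)) : Matrix (Fin l) (Fin n) (WithBot ℝ) :=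
  fun i j => Finset.univ.sup fun k => A i k + B k j

/-- Multiplicative conjugate transpose of a matrix. -/
def conjM {m n : ℕ} (A : Matrix (Fin m) (Fin n) (WithBot ℝ)) :
    Matrix (Fin n) (Fin m) (WithBot ℝ) := fun i j => tinv (A j i)

/-- Max-plus identity matrix. -/
def tId {n : ℕ} : Matrix (Fin n) (Fin n) (WithBot ℝ) := fun i j => if i = j then 0 else ⊥

/-- Max-plus matrix power. -/
def tpow {n : ℕ} (A : Matrix (Fin n) (Fin n) (WithBot ℝ)) : ℕ → Matrix (Fin n) (Fin n) (WithBot ℝ)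
  | 0 => tId
  | k + 1 => tmul A (tpow A k)

/-- Max-plus trace. -/
def ttr {n : ℕ} (A : Matrix (Fin n) (Fin n) (WithBot ℝ)) : WithBot ℝ :=
  Finset.univ.sup fun i => A i i

/-- `Tr(A) = tr A ⊕ tr A² ⊕ ⋯ ⊕ tr Aⁿ`. -/
def TrOp {n : ℕ} (A : Matrix (Fin n) (Fin n) (WithBot ℝ)) : WithBot ℝ :=
  (Finset.Icc 1 n).sup fun m => ttr (tpow A m)

/-- Kleene star `A* = I ⊕ A ⊕ ⋯ ⊕ A^(n-1)`. -/
def kstar {n : ℕ} (A : Matrix (Fin n) (Fin n) (WithBot ℝ)) : Matrix (Fin n) (Fin n) (WithBot ℝ) :=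
  fun i j => (Finset.range n).sup fun k => tpow A k i j

/-- Max-plus spectral radius `λ = ⊕_{m=1}^n (tr A^m)^(1/m)`. -/
def specRad {n : ℕ} (A : Matrix (Fin n) (Fin n) (WithBot ℝ)) : WithBot ℝ :=
  (Finset.Icc 1 n).sup fun m => trt (ttr (tpow A m)) m

/-- `prodAB A B [i₁, …, i_k] = A B^{i₁} A B^{i₂} ⋯ A B^{i_k}`. -/
def prodAB {n : ℕ} (A B : Matrix (Fin n) (Fin n) (WithBot ℝ)) :
    List ℕ → Matrix (Fin n) (Fin n) (WithBot ℝ)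
  | [] => tId
  | i :: t => tmul (tmul A (tpow B i)) (prodAB A B t)

/-- The all-ones (all-`𝟙 = 0`) vector. -/
def onesV (n : ℕ) : Fin n → WithBot ℝ := fun _ => 0

end MaxPlus

open MaxPlus

namespace MaxPlusAux

open MaxPlus

@[simp] lemma tinv_coe (r : ℝ) : tinv (r : WithBot ℝ) = ((-r : ℝ) : WithBot ℝ) := rfl
@[simp] lemma tinv_bot : tinv (⊥ : WithBot ℝ) = ⊥ := rfl
@[simp] lemma trt_coe (r : ℝ) (k : ℕ) : trt (r : WithBot ℝ) k = ((r / k : ℝ) : WithBot ℝ) := rfl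
@[simp] lemma trt_bot (k : ℕ) : trt (⊥ : WithBot ℝ) k = ⊥ := rfl

lemma add_sup_eq {ι : Type*} (a : WithBot ℝ) (s : Finset ι) (f : ι → WithBot ℝ) :
    a + s.sup f = s.sup fun i => a + f i := by
  have hm : Monotone (fun x : WithBot ℝ => a + x) := fun x y hxy => add_le_add_right hxy a
  simpa [Function.comp_def] using
    Finset.comp_sup_eq_sup_comp (fun x : WithBot ℝ => a + x) (fun x y => hm.map_max) (by simp)

lemma sup_add_eq {ι : Type*} (a : WithBot ℝ) (s : Finset ι) (f : ι → WithBot ℝ) :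
    s.sup f + a = s.sup fun i => f i + a := by
  have hm : Monotone (fun x : WithBot ℝ => x + a) := fun x y hxy => add_le_add_left hxy a
  simpa [Function.comp_def] using
    Finset.comp_sup_eq_sup_comp (fun x : WithBot ℝ => x + a) (fun x y => hm.map_max) (by simp)

lemma nonpos_add_le (a b : WithBot ℝ) (ha : a ≤ 0) : a + b ≤ b := by
  simpa using add_le_add ha (le_refl b)

end MaxPlusAux

namespace MaxPlusAux

open MaxPlus Finset

variable {n : ℕ} (B : Matrix (Fin n) (Fin n) (WithBot ℝ))

/-- weight of the path `i :: l`, required to end at `j`. -/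
def lw : Fin n → List (Fin n) → Fin n → WithBot ℝ
  | i, [], j => if i = j then (0 : WithBot ℝ) else ⊥
  | i, k :: t, j => B i k + lw k t j

lemma lw_le_tpow : ∀ (l : List (Fin n)) (i j : Fin n), lw B i l j ≤ tpow B l.length i j := by
  intro l
  induction l with
  | nil => intro i j; simp [lw, tpow, tId]
  | cons k t ih =>
    intro i j
    calc lw B i (k :: t) j = B i k + lw B k t j := rfl
    _ ≤ B i k + tpow B t.length k j := add_le_add_right (ih k j) _
    _ ≤ tpow B (k :: t).length i j := by
        simpa [tpow, tmul] using Finset.le_sup (f := fun k' => B i k' + tpow B t.length k' j)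
          (Finset.mem_univ k)

lemma lw_split : ∀ (l₁ : List (Fin n)) (k : Fin n) (l₂ : List (Fin n)) (i j : Fin n),
    lw B i (l₁ ++ k :: l₂) j = lw B i (l₁ ++ [k]) k + lw B k l₂ j := by
  intro l₁
  induction l₁ with
  | nil => intro k l₂ i j; simp [lw]
  | cons a t ih =>
    intro k l₂ i j
    show B i a + lw B a (t ++ k :: l₂) j = (B i a + lw B a (t ++ [k]) k) + lw B k l₂ j
    rw [ih, add_assoc]

lemma tpow_le_sup_lw : ∀ (m : ℕ) (i j : Fin n),
    tpow B m i j ≤ (Finset.univ : Finset (Fin m → Fin n)).sup fun v => lw B i (List.ofFn v) j := by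
  intro m
  induction m with
  | zero =>
    intro i j
    have hv : (fun x : Fin 0 => x.elim0) ∈ (Finset.univ : Finset (Fin 0 → Fin n)) :=
      Finset.mem_univ _
    calc tpow B 0 i j = lw B i (List.ofFn (fun x : Fin 0 => x.elim0)) j := by
          simp [tpow, tId, lw]
    _ ≤ _ := Finset.le_sup (f := fun v : Fin 0 → Fin n => lw B i (List.ofFn v) j) hv
  | succ m ih =>
    intro i j
    show (Finset.univ.sup fun k => B i k + tpow B m k j) ≤ _
    apply Finset.sup_le
    intro k _
    calc B i k + tpow B m k j
        ≤ B i k + (Finset.univ : Finset (Fin m → Fin n)).sup fun v => lw B k (List.ofFn v) j :=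
          add_le_add_right (ih k j) _
    _ = (Finset.univ : Finset (Fin m → Fin n)).sup fun v => B i k + lw B k (List.ofFn v) j :=
          add_sup_eq _ _ _
    _ ≤ _ := by
        apply Finset.sup_le
        intro v _
        have hofn : List.ofFn (Fin.cons k v) = k :: List.ofFn v := by
          rw [List.ofFn_succ]
          simp
        have heq : B i k + lw B k (List.ofFn v) j = lw B i (List.ofFn (Fin.cons k v)) j := by
          rw [hofn]; rfl
        rw [heq]
        exact Finset.le_sup
          (f := fun v : Fin (m+1) → Fin n => lw B i (List.ofFn v) j) (Finset.mem_univ _)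

lemma cycle_le (hB : TrOp B ≤ 0) (l : List (Fin n)) (x : Fin n)
    (h1 : 1 ≤ l.length) (h2 : l.length ≤ n) : lw B x l x ≤ 0 := by
  calc lw B x l x ≤ tpow B l.length x x := lw_le_tpow B l x x
  _ ≤ ttr (tpow B l.length) :=
      Finset.le_sup (f := fun i => tpow B l.length i i) (Finset.mem_univ x)
  _ ≤ TrOp B := Finset.le_sup (f := fun m => ttr (tpow B m)) (Finset.mem_Icc.mpr ⟨h1, h2⟩)
  _ ≤ 0 := hB

lemma dup_decomp {α : Type*} : ∀ (l : List α) (x : α), [x, x].Sublist l →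
    ∃ l₁ l₂ l₃, l = l₁ ++ x :: l₂ ++ x :: l₃ := by
  intro l
  induction l with
  | nil => intro x hx; exact absurd (List.eq_nil_of_sublist_nil hx) (by simp)
  | cons a t ih =>
    intro x hx
    cases hx with
    | cons _ h =>
      obtain ⟨l₁, l₂, l₃, rfl⟩ := ih x h
      exact ⟨a :: l₁, l₂, l₃, rfl⟩
    | cons_cons _ h =>
      have hmem : a ∈ t := (List.singleton_sublist).mp h
      obtain ⟨l₂, l₃, rfl⟩ := List.append_of_mem hmem
      exact ⟨[], l₂, l₃, rfl⟩

lemma lw_le_kstar (hB : TrOp B ≤ 0) : ∀ (m : ℕ) (l : List (Fin n)) (i j : Fin n),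
    l.length = m → m ≤ n → lw B i l j ≤ kstar B i j := by
  intro m
  induction m using Nat.strong_induction_on with
  | _ m ihm =>
    intro l i j hlen hmn
    rcases lt_or_eq_of_le hmn with hlt | heq
    · calc lw B i l j ≤ tpow B l.length i j := lw_le_tpow B l i j
      _ ≤ kstar B i j := by
          rw [hlen]
          exact Finset.le_sup (f := fun k => tpow B k i j) (Finset.mem_range.mpr hlt)
    · -- l.length = m = n : pigeonhole
      have hnd : ¬ (i :: l).Nodup := by
        intro hnd
        have hc := hnd.length_le_card
        have hc2 : n + 1 ≤ n := by simpa [hlen, heq] using hc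
        omega
      have hex : ∃ x, [x, x].Sublist (i :: l) := by
        by_contra hc
        push_neg at hc
        exact hnd (List.nodup_iff_sublist.mpr hc)
      obtain ⟨x, hxx⟩ := hex
      obtain ⟨L₁, L₂, L₃, hdec⟩ := dup_decomp _ x hxx
      have hLen : L₁.length + L₂.length + L₃.length + 2 = m + 1 := by
        have hc := congrArg List.length hdec
        simp [hlen] at hc
        omega
      have hcyc : lw B x (L₂ ++ [x]) x ≤ 0 := by
        apply cycle_le B hB
        · simp
        · rw [List.length_append, List.length_singleton]
          omega
      rcases L₁ with _ | ⟨a, t⟩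
      · simp only [List.nil_append, List.cons_append] at hdec
        injection hdec with h1 h2
        subst h2
        rw [h1, lw_split B L₂ x L₃ x j]
        calc lw B x (L₂ ++ [x]) x + lw B x L₃ j ≤ lw B x L₃ j := nonpos_add_le _ _ hcyc
        _ ≤ kstar B x j := by
            apply ihm L₃.length _ L₃ x j rfl (by omega)
            simp at hLen
            omega
      · simp only [List.cons_append, List.append_assoc] at hdec
        injection hdec with h1 h2
        subst h2
        simp only [List.length_cons] at hLen
        rw [lw_split B t x (L₂ ++ x :: L₃) i j, lw_split B L₂ x L₃ x j]
        calc lw B i (t ++ [x]) x + (lw B x (L₂ ++ [x]) x + lw B x L₃ j)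
            ≤ lw B i (t ++ [x]) x + lw B x L₃ j :=
              add_le_add_right (nonpos_add_le _ _ hcyc) _
        _ = lw B i (t ++ x :: L₃) j := (lw_split B t x L₃ i j).symm
        _ ≤ kstar B i j := by
            apply ihm (t ++ x :: L₃).length _ _ i j rfl
            · simp
              omega
            · simp
              omega

lemma tpow_n_le_kstar (hB : TrOp B ≤ 0) (i j : Fin n) : tpow B n i j ≤ kstar B i j := by
  calc tpow B n i j ≤ _ := tpow_le_sup_lw B n i j
  _ ≤ kstar B i j := by
      apply Finset.sup_le
      intro v _
      exact lw_le_kstar B hB n (List.ofFn v) i j (by simp) le_rfl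

lemma BK_le (hB : TrOp B ≤ 0) (i j : Fin n) : tmul B (kstar B) i j ≤ kstar B i j := by
  apply Finset.sup_le
  intro k _
  rw [show kstar B k j = (Finset.range n).sup fun m => tpow B m k j from rfl, add_sup_eq]
  apply Finset.sup_le
  intro m hm
  have step : B i k + tpow B m k j ≤ tpow B (m + 1) i j :=
    Finset.le_sup (f := fun k' => B i k' + tpow B m k' j) (Finset.mem_univ k)
  rcases lt_or_eq_of_le (Nat.succ_le_of_lt (Finset.mem_range.mp hm)) with hlt | heq
  · exact step.trans (Finset.le_sup (f := fun k' => tpow B k' i j) (Finset.mem_range.mpr hlt))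
  · refine step.trans ?_
    rw [show m + 1 = n from heq]
    exact tpow_n_le_kstar B hB i j

lemma kstar_diag (hn : 0 < n) (i : Fin n) : (0 : WithBot ℝ) ≤ kstar B i i := by
  have h0 : tpow B 0 i i = 0 := by simp [tpow, tId]
  calc (0 : WithBot ℝ) = tpow B 0 i i := h0.symm
  _ ≤ _ := Finset.le_sup (f := fun k => tpow B k i i) (Finset.mem_range.mpr hn)

end MaxPlusAux

namespace MaxPlusAux

open MaxPlus Finset

variable {n : ℕ} (B : Matrix (Fin n) (Fin n) (WithBot ℝ))

lemma sup_add (a b c : WithBot ℝ) : (a ⊔ b) + c = (a + c) ⊔ (b + c) := by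
  have hm : Monotone (fun x : WithBot ℝ => x + c) := fun x y hxy => add_le_add_left hxy c
  exact hm.map_max

lemma add_sup (a b c : WithBot ℝ) : a + (b ⊔ c) = (a + b) ⊔ (a + c) := by
  have hm : Monotone (fun x : WithBot ℝ => a + x) := fun x y hxy => add_le_add_right hxy a
  exact hm.map_max

lemma ne_bot_coe (a : WithBot ℝ) (ha : a ≠ ⊥) : ∃ r : ℝ, a = ↑r := by
  cases a with
  | bot => exact absurd rfl ha
  | coe r => exact ⟨r, rfl⟩

lemma coe_le_ne_bot {r : ℝ} {a : WithBot ℝ} (hr : (r : WithBot ℝ) ≤ a) : a ≠ ⊥ := by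
  intro hb
  rw [hb] at hr
  exact WithBot.not_coe_le_bot r hr

lemma tpow_add_le (x : Fin n → WithBot ℝ) (hx : ∀ i, mulVec B x i ≤ x i) :
    ∀ (m : ℕ) (i j : Fin n), tpow B m i j + x j ≤ x i := by
  intro m
  induction m with
  | zero =>
    intro i j
    simp only [tpow, tId]
    split_ifs with hij
    · subst hij; simp
    · simp
  | succ m ih =>
    intro i j
    show (Finset.univ.sup fun k => B i k + tpow B m k j) + x j ≤ x i
    rw [sup_add_eq]
    apply Finset.sup_le
    intro k _
    calc (B i k + tpow B m k j) + x j = B i k + (tpow B m k j + x j) := add_assoc _ _ _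
    _ ≤ B i k + x k := add_le_add_right (ih k j) _
    _ ≤ mulVec B x i := Finset.le_sup (f := fun k' => B i k' + x k') (Finset.mem_univ k)
    _ ≤ x i := hx i

lemma kstar_add_le (x : Fin n → WithBot ℝ) (hx : ∀ i, mulVec B x i ≤ x i) (i j : Fin n) :
    kstar B i j + x j ≤ x i := by
  show (Finset.range n).sup (fun m => tpow B m i j) + x j ≤ x i
  rw [sup_add_eq]
  apply Finset.sup_le
  intro m _
  exact tpow_add_le B x hx m i j

lemma le_mulVec_kstar (u : Fin n → WithBot ℝ) (j : Fin n) :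
    u j ≤ mulVec (kstar B) u j := by
  calc u j = 0 + u j := (zero_add _).symm
  _ ≤ kstar B j j + u j := add_le_add_left (kstar_diag B j.pos j) _
  _ ≤ mulVec (kstar B) u j := Finset.le_sup (f := fun k => kstar B j k + u k) (Finset.mem_univ j)

lemma mulVec_BK_le (hB : TrOp B ≤ 0) (u : Fin n → WithBot ℝ) (i : Fin n) :
    mulVec B (mulVec (kstar B) u) i ≤ mulVec (kstar B) u i := by
  apply Finset.sup_le
  intro j _
  show B i j + mulVec (kstar B) u j ≤ _
  rw [show mulVec (kstar B) u j = Finset.univ.sup (fun k => kstar B j k + u k) from rfl,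
    add_sup_eq]
  apply Finset.sup_le
  intro k _
  calc B i j + (kstar B j k + u k) = (B i j + kstar B j k) + u k := (add_assoc _ _ _).symm
  _ ≤ tmul B (kstar B) i k + u k :=
      add_le_add_left (Finset.le_sup (f := fun j' => B i j' + kstar B j' k)
        (Finset.mem_univ j)) _
  _ ≤ kstar B i k + u k := add_le_add_left (BK_le B hB i k) _
  _ ≤ mulVec (kstar B) u i := Finset.le_sup (f := fun k' => kstar B i k' + u k')
      (Finset.mem_univ k)

lemma mulVec_mono (A : Matrix (Fin n) (Fin n) (WithBot ℝ)) {u w : Fin n → WithBot ℝ}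
    (huw : ∀ j, u j ≤ w j) (i : Fin n) : mulVec A u i ≤ mulVec A w i :=
  Finset.sup_mono_fun fun j _ => add_le_add_right (huw j) _

end MaxPlusAux
namespace MaxPlusAux

open MaxPlus

lemma le_tinv_of_add {a b : WithBot ℝ} {rr : ℝ} (hb : b = ↑rr) (hab : b + a ≤ 0) :
    a ≤ tinv b := by
  cases a with
  | bot => exact bot_le
  | coe ar =>
    rw [hb, tinv_coe]
    rw [hb, ← WithBot.coe_add] at hab
    have hr : rr + ar ≤ (0 : ℝ) := by exact_mod_cast hab
    exact WithBot.coe_le_coe.mpr (by linarith)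

end MaxPlusAux

open MaxPlusAux

/-- minimization of `x⁻ p ⊕ q⁻ x` subject to `B x ⊕ g ≤ x`, `x ≤ h`. -/
theorem stmt_2 {n : ℕ} (B : Matrix (Fin n) (Fin n) (WithBot ℝ)) (hB : TrOp B ≤ 0)
    (p : Fin n → WithBot ℝ) (hp : ∃ i, p i ≠ ⊥)
    (q h : Fin n → WithBot ℝ) (hq : Reg q) (hh : Reg h)
    (g : Fin n → WithBot ℝ) (hg : cdot h (mulVec (kstar B) g) ≤ 0)
    (θ : WithBot ℝ)
    (hθ : θ = trt (cdot q (mulVec (kstar B) p)) 2 ⊔ cdot h (mulVec (kstar B) p)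
        ⊔ cdot q (mulVec (kstar B) g)) :
    IsLeast {v | ∃ x : Fin n → WithBot ℝ, Reg x ∧ (∀ i, mulVec B x i ⊔ g i ≤ x i) ∧
        (∀ i, x i ≤ h i) ∧ cdot x p ⊔ cdot q x = v} θ ∧
      ∀ x : Fin n → WithBot ℝ, Reg x → (∀ i, mulVec B x i ⊔ g i ≤ x i) → (∀ i, x i ≤ h i) →
        (cdot x p ⊔ cdot q x = θ ↔
          ∃ u : Fin n → WithBot ℝ, x = mulVec (kstar B) u ∧
            ∀ j, g j ⊔ (tinv θ + p j) ≤ u j ∧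
              u j ≤ tinv (Finset.univ.sup fun i =>
                (tinv (h i) ⊔ (tinv θ + tinv (q i))) + kstar B i j)) := by
  classical
  obtain ⟨i₀, hp0⟩ := hp
  have hn : 0 < n := i₀.pos
  choose qr hqr using fun i => ne_bot_coe (q i) (hq i)
  choose hr hhr using fun i => ne_bot_coe (h i) (hh i)
  obtain ⟨pr, hpr⟩ := ne_bot_coe (p i₀) hp0
  -- scalar abbreviations
  set S := cdot q (mulVec (kstar B) p) with hSdef
  set T := cdot h (mulVec (kstar B) p) with hTdef
  set U := cdot q (mulVec (kstar B) g) with hUdef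
  have hK00 : ∀ i : Fin n, (0 : WithBot ℝ) ≤ kstar B i i := fun i => kstar_diag B i.pos i
  -- S is real
  have hSlb : ((-qr i₀ + pr : ℝ) : WithBot ℝ) ≤ S := by
    calc ((-qr i₀ + pr : ℝ) : WithBot ℝ) = tinv (q i₀) + p i₀ := by
          rw [hqr i₀, hpr, tinv_coe, WithBot.coe_add]
    _ ≤ tinv (q i₀) + mulVec (kstar B) p i₀ := add_le_add_right (le_mulVec_kstar B p i₀) _
    _ ≤ S := Finset.le_sup (f := fun i => tinv (q i) + mulVec (kstar B) p i) (Finset.mem_univ i₀)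
  obtain ⟨sr, hsr⟩ := ne_bot_coe S (coe_le_ne_bot hSlb)
  have hTθ : T ≤ θ := by rw [hθ]; exact le_sup_of_le_left le_sup_right
  have hUθ : U ≤ θ := by rw [hθ]; exact le_sup_right
  have hSθ : trt S 2 ≤ θ := by rw [hθ]; exact le_sup_of_le_left le_sup_left
  have hθne : θ ≠ ⊥ := by
    apply coe_le_ne_bot (r := sr / 2)
    calc ((sr / 2 : ℝ) : WithBot ℝ) = trt S 2 := by rw [hsr, trt_coe]; norm_num
    _ ≤ θ := hSθ
  obtain ⟨θr, hθr⟩ := ne_bot_coe θ hθne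
  have hS2θ : sr ≤ θr + θr := by
    have := hSθ
    rw [hsr, trt_coe, hθr, WithBot.coe_le_coe] at this
    push_cast at this
    linarith
  -- LOWER BOUND : any feasible x has objective ≥ θ
  have lbound : ∀ x : Fin n → WithBot ℝ, Reg x → (∀ i, mulVec B x i ⊔ g i ≤ x i) →
      (∀ i, x i ≤ h i) → θ ≤ cdot x p ⊔ cdot q x := by
    intro x hx hcon hxh
    choose xr hxr using fun i => ne_bot_coe (x i) (hx i)
    have hBx : ∀ i, mulVec B x i ≤ x i := fun i => le_trans le_sup_left (hcon i)
    have hgx : ∀ i, g i ≤ x i := fun i => le_trans le_sup_right (hcon i)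
    have E2x : ∀ i j, kstar B i j + x j ≤ x i := kstar_add_le B x hBx
    have hinv : ∀ i j, tinv (h i) + kstar B i j ≤ tinv (x j) := by
      intro i j
      cases hk : kstar B i j with
      | bot => simp [hhr i]
      | coe kij =>
        have h1 : kij + xr j ≤ xr i := by
          have h0 := E2x i j
          rw [hk, hxr i, hxr j, ← WithBot.coe_add, WithBot.coe_le_coe] at h0
          exact h0
        have h2 : xr i ≤ hr i := by
          have h0 := hxh i
          rw [hxr i, hhr i, WithBot.coe_le_coe] at h0
          exact h0
        rw [hhr i, tinv_coe, hxr j, tinv_coe, ← WithBot.coe_add, WithBot.coe_le_coe]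
        linarith
    have hU1 : U ≤ cdot q x := by
      rw [hUdef]
      apply Finset.sup_mono_fun
      intro i _
      apply add_le_add_right
      apply Finset.sup_le
      intro j _
      exact le_trans (add_le_add_right (hgx j) _) (E2x i j)
    have hT1 : T ≤ cdot x p := by
      rw [hTdef]
      apply Finset.sup_le
      intro i _
      rw [show mulVec (kstar B) p i = Finset.univ.sup (fun j => kstar B i j + p j) from rfl,
        add_sup_eq]
      apply Finset.sup_le
      intro j _
      calc tinv (h i) + (kstar B i j + p j) = (tinv (h i) + kstar B i j) + p j :=
            (add_assoc _ _ _).symm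
      _ ≤ tinv (x j) + p j := add_le_add_left (hinv i j) _
      _ ≤ cdot x p := Finset.le_sup (f := fun j' => tinv (x j') + p j') (Finset.mem_univ j)
    set f := cdot x p ⊔ cdot q x with hfdef
    have hfge : ((-qr i₀ + xr i₀ : ℝ) : WithBot ℝ) ≤ f := by
      calc ((-qr i₀ + xr i₀ : ℝ) : WithBot ℝ) = tinv (q i₀) + x i₀ := by
            rw [hqr i₀, hxr i₀, tinv_coe, WithBot.coe_add]
      _ ≤ cdot q x := Finset.le_sup (f := fun i => tinv (q i) + x i) (Finset.mem_univ i₀)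
      _ ≤ f := le_sup_right
    obtain ⟨fr, hfr⟩ := ne_bot_coe f (coe_le_ne_bot hfge)
    have hSff : S ≤ f + f := by
      rw [hSdef]
      apply Finset.sup_le
      intro i _
      rw [show mulVec (kstar B) p i = Finset.univ.sup (fun j => kstar B i j + p j) from rfl,
        add_sup_eq]
      apply Finset.sup_le
      intro j _
      cases hk : kstar B i j with
      | bot => simp
      | coe kij =>
        cases hpj : p j with
        | bot => simp
        | coe pj =>
          have hE2r : kij + xr j ≤ xr i := by
            have h0 := E2x i j
            rw [hk, hxr i, hxr j, ← WithBot.coe_add, WithBot.coe_le_coe] at h0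
            exact h0
          calc tinv (q i) + ((kij : WithBot ℝ) + (pj : WithBot ℝ))
              ≤ (tinv (q i) + x i) + (tinv (x j) + (pj : WithBot ℝ)) := by
                rw [hqr i, tinv_coe, hxr i, hxr j, tinv_coe]
                repeat rw [← WithBot.coe_add]
                exact WithBot.coe_le_coe.mpr (by linarith)
          _ ≤ cdot q x + cdot x p := by
                apply add_le_add
                · exact Finset.le_sup (f := fun i' => tinv (q i') + x i') (Finset.mem_univ i)
                · rw [← hpj]
                  exact Finset.le_sup (f := fun j' => tinv (x j') + p j') (Finset.mem_univ j)
          _ ≤ f + f := add_le_add le_sup_right le_sup_left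
    rw [hθ]
    refine sup_le (sup_le ?_ (hT1.trans le_sup_left)) (hU1.trans le_sup_right)
    have hsf : sr ≤ fr + fr := by
      rw [hsr, hfr, ← WithBot.coe_add, WithBot.coe_le_coe] at hSff
      exact hSff
    rw [hsr, trt_coe, hfr, WithBot.coe_le_coe]
    push_cast
    linarith
  -- the upper-bound vector R
  set Rden : Fin n → WithBot ℝ := fun j => Finset.univ.sup fun i =>
    (tinv (h i) ⊔ (tinv θ + tinv (q i))) + kstar B i j with hRdendef
  have hRden_hi : ∀ i j : Fin n, tinv (h i) + kstar B i j ≤ Rden j := by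
    intro i j
    exact le_trans (add_le_add_left le_sup_left _)
      (Finset.le_sup (f := fun i => (tinv (h i) ⊔ (tinv θ + tinv (q i))) + kstar B i j)
        (Finset.mem_univ i))
  have hRden_qi : ∀ i j : Fin n, (tinv θ + tinv (q i)) + kstar B i j ≤ Rden j := by
    intro i j
    exact le_trans (add_le_add_left le_sup_right _)
      (Finset.le_sup (f := fun i => (tinv (h i) ⊔ (tinv θ + tinv (q i))) + kstar B i j)
        (Finset.mem_univ i))
  choose kr hkr using fun j => ne_bot_coe (kstar B j j)
    (coe_le_ne_bot (r := 0) (by simpa using hK00 j))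
  have hRden_real : ∀ j, ∃ rr : ℝ, Rden j = ↑rr := by
    intro j
    apply ne_bot_coe
    apply coe_le_ne_bot (r := (-hr j ⊔ (-θr + -qr j)) + kr j)
    calc ((((-hr j ⊔ (-θr + -qr j)) + kr j : ℝ)) : WithBot ℝ)
        = (tinv (h j) ⊔ (tinv θ + tinv (q j))) + kstar B j j := by
          rw [hhr j, hθr, hqr j, hkr j, tinv_coe, tinv_coe, tinv_coe, ← WithBot.coe_add,
            ← WithBot.coe_sup, ← WithBot.coe_add]
    _ ≤ Rden j := Finset.le_sup
        (f := fun i => (tinv (h i) ⊔ (tinv θ + tinv (q i))) + kstar B i j) (Finset.mem_univ j)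
  choose Rr hRr using hRden_real
  set R : Fin n → WithBot ℝ := fun j => tinv (Rden j) with hRdef
  -- sandwich holds for R
  have sandR : ∀ j, g j ⊔ (tinv θ + p j) ≤ R j := by
    intro j
    have hbase : ∀ i, kstar B i j + g j ≤ mulVec (kstar B) g i := fun i =>
      Finset.le_sup (f := fun j' => kstar B i j' + g j') (Finset.mem_univ j)
    have hbasep : ∀ i, kstar B i j + p j ≤ mulVec (kstar B) p i := fun i =>
      Finset.le_sup (f := fun j' => kstar B i j' + p j') (Finset.mem_univ j)
    have hθθ : tinv θ + θ = 0 := by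
      rw [hθr, tinv_coe, ← WithBot.coe_add]
      norm_num
    refine sup_le ?_ ?_
    · apply le_tinv_of_add (hRr j)
      simp only [hRdendef]
      rw [sup_add_eq]
      apply Finset.sup_le
      intro i _
      rw [MaxPlusAux.sup_add, MaxPlusAux.sup_add]
      refine sup_le ?_ ?_
      · calc (tinv (h i) + kstar B i j) + g j
            = tinv (h i) + (kstar B i j + g j) := add_assoc _ _ _
        _ ≤ tinv (h i) + mulVec (kstar B) g i := add_le_add_right (hbase i) _
        _ ≤ cdot h (mulVec (kstar B) g) :=
            Finset.le_sup (f := fun i' => tinv (h i') + mulVec (kstar B) g i') (Finset.mem_univ i)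
        _ ≤ 0 := hg
      · calc ((tinv θ + tinv (q i)) + kstar B i j) + g j
            = tinv θ + (tinv (q i) + (kstar B i j + g j)) := by
              rw [add_assoc, add_assoc]
        _ ≤ tinv θ + (tinv (q i) + mulVec (kstar B) g i) :=
            add_le_add_right (add_le_add_right (hbase i) _) _
        _ ≤ tinv θ + U := by
            rw [hUdef]
            exact add_le_add_right (Finset.le_sup
              (f := fun i' => tinv (q i') + mulVec (kstar B) g i') (Finset.mem_univ i)) _
        _ ≤ tinv θ + θ := add_le_add_right hUθ _
        _ = 0 := hθθ
    · apply le_tinv_of_add (hRr j)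
      simp only [hRdendef]
      rw [sup_add_eq]
      apply Finset.sup_le
      intro i _
      rw [MaxPlusAux.sup_add, MaxPlusAux.sup_add]
      refine sup_le ?_ ?_
      · calc (tinv (h i) + kstar B i j) + (tinv θ + p j)
            = tinv θ + (tinv (h i) + (kstar B i j + p j)) := by abel
        _ ≤ tinv θ + (tinv (h i) + mulVec (kstar B) p i) :=
            add_le_add_right (add_le_add_right (hbasep i) _) _
        _ ≤ tinv θ + T := by
            rw [hTdef]
            exact add_le_add_right (Finset.le_sup
              (f := fun i' => tinv (h i') + mulVec (kstar B) p i') (Finset.mem_univ i)) _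
        _ ≤ tinv θ + θ := add_le_add_right hTθ _
        _ = 0 := hθθ
      · calc ((tinv θ + tinv (q i)) + kstar B i j) + (tinv θ + p j)
            = (tinv θ + tinv θ) + (tinv (q i) + (kstar B i j + p j)) := by abel
        _ ≤ (tinv θ + tinv θ) + (tinv (q i) + mulVec (kstar B) p i) :=
            add_le_add_right (add_le_add_right (hbasep i) _) _
        _ ≤ (tinv θ + tinv θ) + S := by
            rw [hSdef]
            exact add_le_add_right (Finset.le_sup
              (f := fun i' => tinv (q i') + mulVec (kstar B) p i') (Finset.mem_univ i)) _
        _ ≤ 0 := by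
            rw [hθr, tinv_coe, hsr, ← WithBot.coe_add, ← WithBot.coe_add]
            have : (-θr + -θr) + sr ≤ (0 : ℝ) := by linarith
            exact_mod_cast this
  -- any u satisfying the sandwich yields feasible x = K u with objective ≤ θ
  have feas : ∀ u : Fin n → WithBot ℝ,
      (∀ j, g j ⊔ (tinv θ + p j) ≤ u j ∧ u j ≤ R j) →
      (∀ i, mulVec B (mulVec (kstar B) u) i ⊔ g i ≤ mulVec (kstar B) u i) ∧
      (∀ i, mulVec (kstar B) u i ≤ h i) := by
    intro u hu
    constructor
    · intro i
      refine sup_le (mulVec_BK_le B hB u i) ?_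
      exact le_trans (le_trans le_sup_left (hu i).1) (le_mulVec_kstar B u i)
    · intro i
      apply Finset.sup_le
      intro j _
      cases hk : kstar B i j with
      | bot => simp
      | coe kij =>
        cases hj : u j with
        | bot => simp
        | coe uj =>
          have h1 : -hr i + kij ≤ Rr j := by
            have h0 := hRden_hi i j
            rw [hk, hhr i, tinv_coe, hRr j, ← WithBot.coe_add, WithBot.coe_le_coe] at h0
            exact h0
          have h2 : uj ≤ -Rr j := by
            have h0 := (hu j).2
            simp only [hRdef] at h0
            rw [hRr j, tinv_coe, hj, WithBot.coe_le_coe] at h0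
            exact h0
          rw [hhr i, ← WithBot.coe_add, WithBot.coe_le_coe]
          linarith
  have ub : ∀ u : Fin n → WithBot ℝ,
      (∀ j, g j ⊔ (tinv θ + p j) ≤ u j ∧ u j ≤ R j) →
      cdot (mulVec (kstar B) u) p ⊔ cdot q (mulVec (kstar B) u) ≤ θ := by
    intro u hu
    refine sup_le ?_ ?_
    · apply Finset.sup_le
      intro j _
      have hxlb : tinv θ + p j ≤ mulVec (kstar B) u j :=
        le_trans (le_trans le_sup_right (hu j).1) (le_mulVec_kstar B u j)
      cases hpj : p j with
      | bot => simp
      | coe pj =>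
        rw [hpj, hθr, tinv_coe, ← WithBot.coe_add] at hxlb
        obtain ⟨w, hw⟩ := ne_bot_coe _ (coe_le_ne_bot hxlb)
        rw [hw, WithBot.coe_le_coe] at hxlb
        rw [hw, tinv_coe, hθr, ← WithBot.coe_add, WithBot.coe_le_coe]
        linarith
    · apply Finset.sup_le
      intro i _
      rw [show mulVec (kstar B) u i = Finset.univ.sup (fun j => kstar B i j + u j) from rfl,
        add_sup_eq]
      apply Finset.sup_le
      intro j _
      cases hk : kstar B i j with
      | bot => simp
      | coe kij =>
        cases hj : u j with
        | bot => simp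
        | coe uj =>
          have h1 : (-θr + -qr i) + kij ≤ Rr j := by
            have h0 := hRden_qi i j
            rw [hk, hθr, hqr i, tinv_coe, tinv_coe, hRr j, ← WithBot.coe_add,
              ← WithBot.coe_add, WithBot.coe_le_coe] at h0
            exact h0
          have h2 : uj ≤ -Rr j := by
            have h0 := (hu j).2
            simp only [hRdef] at h0
            rw [hRr j, tinv_coe, hj, WithBot.coe_le_coe] at h0
            exact h0
          rw [hqr i, tinv_coe, hθr, ← WithBot.coe_add, ← WithBot.coe_add, WithBot.coe_le_coe]
          linarith
  have regKR : Reg (mulVec (kstar B) R) := by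
    intro i
    apply coe_le_ne_bot (r := kr i + -Rr i)
    calc ((kr i + -Rr i : ℝ) : WithBot ℝ) = kstar B i i + R i := by
          simp only [hRdef]
          rw [hkr i, hRr i, tinv_coe, WithBot.coe_add]
    _ ≤ mulVec (kstar B) R i :=
        Finset.le_sup (f := fun j => kstar B i j + R j) (Finset.mem_univ i)
  -- assemble
  have sand' : ∀ j, g j ⊔ (tinv θ + p j) ≤ R j ∧ R j ≤ R j := fun j => ⟨sandR j, le_rfl⟩
  obtain ⟨hfe1, hfe2⟩ := feas R sand'
  have hval : cdot (mulVec (kstar B) R) p ⊔ cdot q (mulVec (kstar B) R) = θ :=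
    le_antisymm (ub R sand') (lbound _ regKR hfe1 hfe2)
  refine ⟨⟨⟨mulVec (kstar B) R, regKR, hfe1, hfe2, hval⟩, ?_⟩, ?_⟩
  · rintro v ⟨x, hxreg, hc1, hc2, rfl⟩
    exact lbound x hxreg hc1 hc2
  · intro x hx hcon hxh
    constructor
    · intro hfθ
      have hBx : ∀ i, mulVec B x i ≤ x i := fun i => le_trans le_sup_left (hcon i)
      have hgx : ∀ i, g i ≤ x i := fun i => le_trans le_sup_right (hcon i)
      have E2x : ∀ i j, kstar B i j + x j ≤ x i := kstar_add_le B x hBx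
      choose xr hxr using fun i => ne_bot_coe (x i) (hx i)
      have hxK : x = mulVec (kstar B) x := by
        funext i
        exact le_antisymm (le_mulVec_kstar B x i) (Finset.sup_le fun j _ => E2x i j)
      have hqxθ : cdot q x ≤ θ := by rw [← hfθ]; exact le_sup_right
      have hxpθ : cdot x p ≤ θ := by rw [← hfθ]; exact le_sup_left
      refine ⟨x, hxK, fun j => ⟨?_, ?_⟩⟩
      · refine sup_le (hgx j) ?_
        cases hpj : p j with
        | bot => simp
        | coe pj =>
          have h0 : tinv (x j) + p j ≤ θ :=
            le_trans (Finset.le_sup (f := fun j' => tinv (x j') + p j') (Finset.mem_univ j)) hxpθ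
          rw [hpj, hxr j, tinv_coe, hθr, ← WithBot.coe_add, WithBot.coe_le_coe] at h0
          rw [hθr, tinv_coe, hxr j, ← WithBot.coe_add, WithBot.coe_le_coe]
          linarith
      · have hx_le : x j ≤ tinv (Rden j) := by
          apply le_tinv_of_add (hRr j)
          simp only [hRdendef]
          rw [sup_add_eq]
          apply Finset.sup_le
          intro i _
          rw [MaxPlusAux.sup_add, MaxPlusAux.sup_add]
          refine sup_le ?_ ?_
          · cases hk : kstar B i j with
            | bot => simp
            | coe kij =>
              have h1 : kij + xr j ≤ xr i := by
                have h0 := E2x i j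
                rw [hk, hxr i, hxr j, ← WithBot.coe_add, WithBot.coe_le_coe] at h0
                exact h0
              have h2 : xr i ≤ hr i := by
                have h0 := hxh i
                rw [hxr i, hhr i, WithBot.coe_le_coe] at h0
                exact h0
              rw [hhr i, tinv_coe, hxr j, ← WithBot.coe_add, ← WithBot.coe_add]
              have hfin : (-hr i + kij) + xr j ≤ (0 : ℝ) := by linarith
              exact_mod_cast hfin
          · cases hk : kstar B i j with
            | bot => simp
            | coe kij =>
              have h1 : kij + xr j ≤ xr i := by
                have h0 := E2x i j
                rw [hk, hxr i, hxr j, ← WithBot.coe_add, WithBot.coe_le_coe] at h0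
                exact h0
              have h3 : -qr i + xr i ≤ θr := by
                have h0 : tinv (q i) + x i ≤ θ := le_trans (Finset.le_sup
                  (f := fun i' => tinv (q i') + x i') (Finset.mem_univ i)) hqxθ
                rw [hqr i, tinv_coe, hxr i, hθr, ← WithBot.coe_add, WithBot.coe_le_coe] at h0
                exact h0
              rw [hθr, tinv_coe, hqr i, tinv_coe, hxr j, ← WithBot.coe_add, ← WithBot.coe_add,
                ← WithBot.coe_add]
              have hfin : ((-θr + -qr i) + kij) + xr j ≤ (0 : ℝ) := by linarith
              exact_mod_cast hfin
        rw [hRdendef] at hx_le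
        simpa using hx_le
    · rintro ⟨u, rfl, hu⟩
      have hu' : ∀ j, g j ⊔ (tinv θ + p j) ≤ u j ∧ u j ≤ R j := by
        intro j
        refine ⟨(hu j).1, ?_⟩
        have h0 := (hu j).2
        simp only [hRdef, hRdendef]
        exact h0
      exact le_antisymm (ub u hu') (lbound _ hx hcon hxh)
end
end

section
/- Let A ∈ (ℝ ∪ {−∞})^{m×n} be a row-regular matrix, let B ∈ (ℝ ∪ {−∞})^{m×n} be a column-regular matrix, let p ∈ (ℝ ∪ {−∞})^m be a nonzero vector, and let q ∈ ℝ^m be a regular vector. Then the minimum of q⁻ B x ⊗ (A x)⁻ p over all regular vectors x ∈ ℝⁿ equals Δ = (A (q⁻ B)⁻)⁻ p, and this minimum is attained at every vector x = α (q⁻ B)⁻ with α ∈ ℝ. -/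
open Finset

noncomputable section

open MaxPlus

lemma tinv_coe' (r : ℝ) : tinv (r : WithBot ℝ) = ((-r : ℝ) : WithBot ℝ) := rfl

lemma add_sup' (c x y : WithBot ℝ) : c + (x ⊔ y) = (c + x) ⊔ (c + y) := by
  rcases le_total x y with h | h
  · rw [sup_eq_right.2 h, sup_eq_right.2 (add_le_add_right h c)]
  · rw [sup_eq_left.2 h, sup_eq_left.2 (add_le_add_right h c)]

lemma sup_const_add {ι : Type} [Fintype ι] (c : WithBot ℝ) (f : ι → WithBot ℝ) :
    (Finset.univ.sup fun j => c + f j) = c + Finset.univ.sup f := by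
  rw [Finset.comp_sup_eq_sup_comp (fun x => c + x) (fun x y => add_sup' c x y) (WithBot.add_bot c)]
  rfl

lemma sup_ne_bot_of {ι : Type} [Fintype ι] (f : ι → WithBot ℝ) (i : ι) (h : f i ≠ ⊥) :
    Finset.univ.sup f ≠ ⊥ := by
  intro hb
  exact h (le_bot_iff.1 (hb ▸ Finset.le_sup (Finset.mem_univ i)))

lemma coe_add' (a b : ℝ) : ((a : WithBot ℝ) + (b : WithBot ℝ)) = ((a + b : ℝ) : WithBot ℝ) := by
  push_cast; ring

lemma coe_eq {a b : ℝ} (h : a = b) : ((a : WithBot ℝ)) = b := by rw [h]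

lemma exists_real {x : WithBot ℝ} (h : x ≠ ⊥) : ∃ r : ℝ, x = r := by
  obtain ⟨r, hr⟩ := WithBot.ne_bot_iff_exists.1 h; exact ⟨r, hr.symm⟩

/-- unconstrained minimization of `q⁻ B x ⊗ (A x)⁻ p`. -/
theorem stmt_4 {m n : ℕ} (A B : Matrix (Fin m) (Fin n) (WithBot ℝ))
    (hA : ∀ i, ∃ j, A i j ≠ ⊥) (hB : ∀ j, ∃ i, B i j ≠ ⊥)
    (p : Fin m → WithBot ℝ) (hp : ∃ i, p i ≠ ⊥)
    (q : Fin m → WithBot ℝ) (hq : Reg q)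
    (Δ : WithBot ℝ)
    (hΔ : Δ = cdot (mulVec A (fun j => tinv (Finset.univ.sup fun i => tinv (q i) + B i j))) p) :
    (∀ x : Fin n → WithBot ℝ, Reg x →
        Δ ≤ cdot q (mulVec B x) + cdot (mulVec A x) p) ∧
      ∀ α : ℝ,
        Reg (fun j => (α : WithBot ℝ) + tinv (Finset.univ.sup fun i => tinv (q i) + B i j)) ∧
        cdot q (mulVec B
              (fun j => (α : WithBot ℝ) + tinv (Finset.univ.sup fun i => tinv (q i) + B i j)))
            + cdot (mulVec A
              (fun j => (α : WithBot ℝ) + tinv (Finset.univ.sup fun i => tinv (q i) + B i j))) p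
          = Δ := by
  classical
  obtain ⟨i0, hpi0⟩ := hp
  have hm : Nonempty (Fin m) := ⟨i0⟩
  obtain ⟨j0, hAi0j0⟩ := hA i0
  have hn : Nonempty (Fin n) := ⟨j0⟩
  -- q entries are real
  have hqr : ∀ i, ∃ r : ℝ, q i = r := fun i => exists_real (hq i)
  choose qr hqrv using hqr
  have htq : ∀ i, tinv (q i) = ((-(qr i) : ℝ) : WithBot ℝ) := fun i => by
    rw [hqrv i]; rfl
  -- the vector s and y
  set s : Fin n → WithBot ℝ := fun j => Finset.univ.sup fun i => tinv (q i) + B i j with hs_def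
  set y : Fin n → WithBot ℝ := fun j => tinv (s j) with hy_def
  have hsnb : ∀ j, s j ≠ ⊥ := by
    intro j
    obtain ⟨i, hBij⟩ := hB j
    refine sup_ne_bot_of _ i (WithBot.add_ne_bot.2 ⟨?_, hBij⟩)
    rw [htq i]; exact WithBot.coe_ne_bot
  choose sr hsrv using fun j => exists_real (hsnb j)
  have hyv : ∀ j, y j = ((-(sr j) : ℝ) : WithBot ℝ) := fun j => by
    simp only [hy_def]; rw [hsrv j]; rfl
  have hynb : ∀ j, y j ≠ ⊥ := fun j => by rw [hyv j]; exact WithBot.coe_ne_bot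
  -- A*y entries are real
  have hAynb : ∀ i, mulVec A y i ≠ ⊥ := by
    intro i
    obtain ⟨j, hAij⟩ := hA i
    exact sup_ne_bot_of _ j (WithBot.add_ne_bot.2 ⟨hAij, hynb j⟩)
  choose ayr hayv using fun i => exists_real (hAynb i)
  -- bound on terms of s
  have hsle : ∀ i j, tinv (q i) + B i j ≤ s j := fun i j =>
    Finset.le_sup (f := fun i => tinv (q i) + B i j) (Finset.mem_univ i)
  constructor
  · -- Part 1
    intro x hx
    choose xr hxv using fun j => exists_real (hx j)
    set c := cdot q (mulVec B x) with hc_def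
    have hcnb : c ≠ ⊥ := by
      obtain ⟨i1, hBi1⟩ := hB j0
      refine sup_ne_bot_of _ i1 (WithBot.add_ne_bot.2 ⟨?_, ?_⟩)
      · rw [htq i1]; exact WithBot.coe_ne_bot
      · exact sup_ne_bot_of _ j0 (WithBot.add_ne_bot.2 ⟨hBi1, hx j0⟩)
    obtain ⟨cr, hcr⟩ := exists_real hcnb
    -- key: x j + s j ≤ c
    have key : ∀ j, x j + s j ≤ c := by
      intro j
      rw [hs_def]
      show x j + (Finset.univ.sup fun i => tinv (q i) + B i j) ≤ c
      rw [← sup_const_add]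
      refine Finset.sup_le fun i _ => ?_
      calc x j + (tinv (q i) + B i j) = tinv (q i) + (B i j + x j) := by abel
        _ ≤ tinv (q i) + mulVec B x i :=
          add_le_add_right (Finset.le_sup (f := fun j => B i j + x j) (Finset.mem_univ j)) _
        _ ≤ c := Finset.le_sup (f := fun i => tinv (q i) + mulVec B x i) (Finset.mem_univ i)
    -- hence x j ≤ cr + y j
    have hxle : ∀ j, x j ≤ (cr : WithBot ℝ) + y j := by
      intro j
      have h := key j
      rw [hcr, hxv j, hsrv j, coe_add', WithBot.coe_le_coe] at h
      rw [hxv j, hyv j, coe_add', WithBot.coe_le_coe]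
      linarith
    -- hence A x ≤ cr + A y entrywise
    have hAxle : ∀ i, mulVec A x i ≤ (cr : WithBot ℝ) + mulVec A y i := by
      intro i
      refine Finset.sup_le fun j _ => ?_
      calc A i j + x j ≤ A i j + ((cr : WithBot ℝ) + y j) := add_le_add_right (hxle j) _
        _ = (cr : WithBot ℝ) + (A i j + y j) := by abel
        _ ≤ (cr : WithBot ℝ) + mulVec A y i :=
          add_le_add_right (Finset.le_sup (f := fun j => A i j + y j) (Finset.mem_univ j)) _
    -- A x entries real
    have hAxnb : ∀ i, mulVec A x i ≠ ⊥ := by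
      intro i
      obtain ⟨j, hAij⟩ := hA i
      exact sup_ne_bot_of _ j (WithBot.add_ne_bot.2 ⟨hAij, hx j⟩)
    choose axr haxv using fun i => exists_real (hAxnb i)
    rw [hΔ, hcr]
    refine Finset.sup_le fun i _ => ?_
    rcases eq_or_ne (p i) ⊥ with hpb | hpb
    · rw [hpb, WithBot.add_bot]; exact bot_le
    obtain ⟨pr, hprv⟩ := exists_real hpb
    have h1 : axr i ≤ cr + ayr i := by
      have h := hAxle i
      rw [haxv i, hayv i, coe_add', WithBot.coe_le_coe] at h
      exact h
    calc tinv (mulVec A y i) + p i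
        = (((pr - ayr i) : ℝ) : WithBot ℝ) := by
          rw [hayv i, hprv, tinv_coe', coe_add']; exact coe_eq (by ring)
      _ ≤ ((cr + (-(axr i) + pr) : ℝ) : WithBot ℝ) := by
          rw [WithBot.coe_le_coe]; linarith
      _ = (cr : WithBot ℝ) + (tinv (mulVec A x i) + p i) := by
          rw [haxv i, hprv, tinv_coe', coe_add', coe_add']
      _ ≤ (cr : WithBot ℝ) + cdot (mulVec A x) p :=
          add_le_add_right (Finset.le_sup (f := fun i => tinv (mulVec A x i) + p i)
            (Finset.mem_univ i)) _
  · -- Part 2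
    intro α
    set xα : Fin n → WithBot ℝ := fun j => (α : WithBot ℝ) + y j with hxα_def
    have hxαv : ∀ j, xα j = ((α - sr j : ℝ) : WithBot ℝ) := by
      intro j
      simp only [hxα_def]; rw [hyv j, coe_add']; exact coe_eq (by ring)
    refine ⟨fun j => by rw [hxαv j]; exact WithBot.coe_ne_bot, ?_⟩
    -- cdot q (B xα) = α
    have ha : cdot q (mulVec B xα) = (α : WithBot ℝ) := by
      apply le_antisymm
      · refine Finset.sup_le fun i _ => ?_
        show tinv (q i) + mulVec B xα i ≤ _
        have : mulVec B xα i = Finset.univ.sup fun j => B i j + xα j := rfl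
        rw [this, ← sup_const_add]
        refine Finset.sup_le fun j _ => ?_
        calc tinv (q i) + (B i j + xα j) = (tinv (q i) + B i j) + xα j := by abel
          _ ≤ s j + xα j := add_le_add_left (hsle i j) _
          _ = (α : WithBot ℝ) := by
              rw [hsrv j, hxαv j, coe_add']; exact coe_eq (by ring)
      · obtain ⟨i1, _, hi1⟩ := Finset.exists_mem_eq_sup Finset.univ Finset.univ_nonempty
          (fun i => tinv (q i) + B i j0)
        have hsj0 : s j0 = tinv (q i1) + B i1 j0 := hi1
        calc (α : WithBot ℝ) = s j0 + xα j0 := by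
              rw [hsrv j0, hxαv j0, coe_add']; exact (coe_eq (by ring)).symm
          _ = tinv (q i1) + (B i1 j0 + xα j0) := by rw [hsj0]; abel
          _ ≤ tinv (q i1) + mulVec B xα i1 :=
            add_le_add_right (Finset.le_sup (f := fun j => B i1 j + xα j) (Finset.mem_univ j0)) _
          _ ≤ cdot q (mulVec B xα) :=
            Finset.le_sup (f := fun i => tinv (q i) + mulVec B xα i) (Finset.mem_univ i1)
    -- A xα = α + A y entrywise
    have hAxα : ∀ i, mulVec A xα i = (α : WithBot ℝ) + mulVec A y i := by
      intro i
      show (Finset.univ.sup fun j => A i j + xα j) = _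
      have : (fun j => A i j + xα j) = fun j => (α : WithBot ℝ) + (A i j + y j) := by
        funext j; simp only [hxα_def]; abel
      rw [this, sup_const_add]; rfl
    have hb : cdot (mulVec A xα) p = ((-α : ℝ) : WithBot ℝ) + Δ := by
      rw [hΔ]
      show (Finset.univ.sup fun i => tinv (mulVec A xα i) + p i) = _
      have : (fun i => tinv (mulVec A xα i) + p i)
          = fun i => ((-α : ℝ) : WithBot ℝ) + (tinv (mulVec A y i) + p i) := by
        funext i
        rw [hAxα i, hayv i, coe_add', tinv_coe', tinv_coe', ← add_assoc, coe_add']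
        have hr : (-(α + ayr i) : ℝ) = -α + -ayr i := by ring
        rw [hr]
      rw [this, sup_const_add]; rfl
    rw [ha, hb, ← add_assoc, coe_add']
    have hz : (α + -α : ℝ) = 0 := by ring
    rw [hz, WithBot.coe_zero, zero_add]
end
end

section
/- Let C ∈ (ℝ ∪ {−∞})^{n×n} be a regular matrix and let D ∈ (ℝ ∪ {−∞})^{n×n} satisfy Tr(D) ≤ 𝟙. Then the minimum of 𝟙ᵀ y ⊗ y⁻ 𝟙, where y = C x, over all regular vectors x ∈ ℝⁿ satisfying D x ≤ x equals Δ = (C D* (𝟙ᵀ C D*)⁻)⁻ 𝟙, and this minimum is attained at every vector x = α D* (𝟙ᵀ C D*)⁻ with α ∈ ℝ. -/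
open Finset

noncomputable section

namespace MaxPlus

lemma tinv_bot : tinv ⊥ = ⊥ := rfl
lemma tinv_coe (r : ℝ) : tinv (r : WithBot ℝ) = ((-r : ℝ) : WithBot ℝ) := rfl
lemma tinv_zero : tinv 0 = 0 := by
  show tinv ((0:ℝ) : WithBot ℝ) = 0
  rw [tinv_coe]; norm_num
lemma tinv_le_tinv {a b : WithBot ℝ} (ha : a ≠ ⊥) (h : a ≤ b) : tinv b ≤ tinv a := by
  induction a using WithBot.recBotCoe with
  | bot => exact absurd rfl ha
  | coe a => induction b using WithBot.recBotCoe with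
    | bot => simp at h
    | coe b =>
      rw [tinv_coe, tinv_coe, WithBot.coe_le_coe]
      have := WithBot.coe_le_coe.mp h
      linarith
lemma tinv_coe_add (r : ℝ) (z : WithBot ℝ) : tinv ((r : WithBot ℝ) + z) = ((-r : ℝ) : WithBot ℝ) + tinv z := by
  induction z using WithBot.recBotCoe with
  | bot => simp [tinv_bot, WithBot.add_bot]
  | coe z => rw [← WithBot.coe_add, tinv_coe, tinv_coe, ← WithBot.coe_add]; ring_nf

lemma add_max (a x y : WithBot ℝ) : a + (x ⊔ y) = (a + x) ⊔ (a + y) :=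
  Monotone.map_sup (f := (a + ·)) (fun u v h => add_le_add_right h a) x y
lemma max_add (a x y : WithBot ℝ) : (x ⊔ y) + a = (x + a) ⊔ (y + a) := by
  rw [add_comm, add_max, add_comm a x, add_comm a y]

lemma add_fsup {ι : Type} (s : Finset ι) (hs : s.Nonempty) (a : WithBot ℝ) (f : ι → WithBot ℝ) :
    a + s.sup f = s.sup fun i => a + f i := by
  induction hs using Finset.Nonempty.cons_induction with
  | singleton i => simp
  | cons i s hi hs ih => rw [Finset.sup_cons, Finset.sup_cons, add_max, ih]
lemma fsup_add {ι : Type} (s : Finset ι) (hs : s.Nonempty) (a : WithBot ℝ) (f : ι → WithBot ℝ) :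
    s.sup f + a = s.sup fun i => f i + a := by
  rw [add_comm, add_fsup s hs]; simp [add_comm]

lemma mulVec_tmul {n : ℕ} [NeZero n] (A B : Matrix (Fin n) (Fin n) (WithBot ℝ))
    (x : Fin n → WithBot ℝ) : mulVec (tmul A B) x = mulVec A (mulVec B x) := by
  funext i
  show (univ.sup fun j => (univ.sup fun k => A i k + B k j) + x j)
      = univ.sup fun k => A i k + univ.sup fun j => B k j + x j
  have h1 : ∀ j, (univ.sup fun k => A i k + B k j) + x j = univ.sup fun k => A i k + (B k j + x j) := by
    intro j; rw [fsup_add _ univ_nonempty]; simp [add_assoc]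
  have h2 : ∀ k, A i k + (univ.sup fun j => B k j + x j) = univ.sup fun j => A i k + (B k j + x j) := by
    intro k; rw [add_fsup _ univ_nonempty]
  simp only [h1, h2]
  exact Finset.sup_comm _ _ _

lemma mulVec_mono {m n : ℕ} (A : Matrix (Fin m) (Fin n) (WithBot ℝ)) {x y : Fin n → WithBot ℝ}
    (h : ∀ j, x j ≤ y j) (i : Fin m) : mulVec A x i ≤ mulVec A y i :=
  Finset.sup_mono_fun fun j _ => add_le_add_right (h j) _


variable {n : ℕ}

/-- weight of the length-`k` path `p 0, p 1, …, p k`. -/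
def pw (D : Matrix (Fin n) (Fin n) (WithBot ℝ)) (p : ℕ → Fin n) (k : ℕ) : WithBot ℝ :=
  ∑ t ∈ Finset.range k, D (p t) (p (t+1))

lemma pw_le_tpow (D : Matrix (Fin n) (Fin n) (WithBot ℝ)) :
    ∀ (k : ℕ) (p : ℕ → Fin n), pw D p k ≤ tpow D k (p 0) (p k) := by
  intro k
  induction k with
  | zero => intro p; simp [pw, tpow, tId]
  | succ k ih =>
    intro p
    have hsum : pw D p (k+1) = D (p 0) (p 1) + pw D (fun t => p (t+1)) k := by
      rw [pw, Finset.sum_range_succ', add_comm]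
      rfl
    rw [hsum]
    calc D (p 0) (p 1) + pw D (fun t => p (t+1)) k
        ≤ D (p 0) (p 1) + tpow D k (p 1) (p (k+1)) := add_le_add_right (ih _) _
      _ ≤ tpow D (k+1) (p 0) (p (k+1)) :=
          Finset.le_sup (f := fun m => D (p 0) m + tpow D k m (p (k+1))) (Finset.mem_univ (p 1))

lemma tpow_le_of_paths (D : Matrix (Fin n) (Fin n) (WithBot ℝ)) :
    ∀ (k : ℕ) (i j : Fin n) (c : WithBot ℝ),
      (∀ p : ℕ → Fin n, p 0 = i → p k = j → pw D p k ≤ c) → tpow D k i j ≤ c := by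
  intro k
  induction k with
  | zero =>
    intro i j c h
    by_cases hij : i = j
    · subst hij
      have := h (fun _ => i) rfl rfl
      simpa [pw, tpow, tId] using this
    · simp [tpow, tId, hij]
  | succ k ih =>
    intro i j c h
    show (Finset.univ.sup fun m => D i m + tpow D k m j) ≤ c
    refine Finset.sup_le fun m _ => ?_
    rcases eq_or_ne (D i m) ⊥ with hDm | hne
    · simp [hDm]
    · obtain ⟨r, hDm⟩ := WithBot.ne_bot_iff_exists.mp hne
      set c' : WithBot ℝ := WithBot.map (fun z => z - r) c with hc'
      have key : ∀ z : WithBot ℝ, (r : WithBot ℝ) + z ≤ c ↔ z ≤ c' := by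
        intro z
        induction c using WithBot.recBotCoe with
        | bot =>
          induction z using WithBot.recBotCoe with
          | bot => simp [hc', WithBot.add_bot]
          | coe z => simp [hc', ← WithBot.coe_add]
        | coe s =>
          induction z using WithBot.recBotCoe with
          | bot => simp [hc', WithBot.add_bot]
          | coe z =>
            simp only [hc', ← WithBot.coe_add, WithBot.map_coe, WithBot.coe_le_coe]
            constructor <;> intro <;> linarith
      have hm : tpow D k m j ≤ c' := by
        refine ih m j c' fun p hp0 hpk => ?_
        rw [← key]
        have := h (fun t => if t = 0 then i else p (t-1)) (by simp) (by simp [hpk])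
        have hrw : pw D (fun t => if t = 0 then i else p (t-1)) (k+1)
            = pw D p k + D i (p 0) := by
          rw [pw, Finset.sum_range_succ']
          congr 1
          all_goals first
            | (rw [pw]; exact Finset.sum_congr rfl fun t ht => by simp)
            | simp
        rw [hrw, hp0, ← hDm, add_comm] at this
        exact this
      calc D i m + tpow D k m j ≤ D i m + c' := add_le_add_right hm _
        _ = (r : WithBot ℝ) + c' := by rw [← hDm]

        _ ≤ c := (key c').mpr le_rfl


lemma cycle_le_zero {D : Matrix (Fin n) (Fin n) (WithBot ℝ)} (hD : TrOp D ≤ 0)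
    (p : ℕ → Fin n) (s m : ℕ) (hm1 : 1 ≤ m) (hmn : m ≤ n) (hc : p s = p (s + m)) :
    pw D (fun t => p (s + t)) m ≤ 0 := by
  calc pw D (fun t => p (s + t)) m ≤ tpow D m (p (s + 0)) (p (s + m)) := pw_le_tpow D m _
    _ = tpow D m (p s) (p s) := by rw [← hc]; norm_num
    _ ≤ ttr (tpow D m) := by
        unfold ttr; exact Finset.le_sup (f := fun i => tpow D m i i) (Finset.mem_univ (p s))
    _ ≤ TrOp D := by
        unfold TrOp; exact Finset.le_sup (f := fun m => ttr (tpow D m)) (Finset.mem_Icc.mpr ⟨hm1, hmn⟩)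
    _ ≤ 0 := hD

lemma splice_le {D : Matrix (Fin n) (Fin n) (WithBot ℝ)} (hD : TrOp D ≤ 0)
    (p : ℕ → Fin n) (i j : Fin n) (hp0 : p 0 = i) (hpn : p n = j)
    (s t : ℕ) (hst : s < t) (htn : t ≤ n) (heq : p s = p t) :
    pw D p n ≤ kstar D i j := by
  set m := t - s with hm
  have hm1 : 1 ≤ m := by omega
  have hmn : m ≤ n := by omega
  set k' := n - m with hk'
  have hkm : k' + m = n := by omega
  have hsk' : s ≤ k' := by omega
  set p' : ℕ → Fin n := fun u => if u ≤ s then p u else p (u + m) with hp'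
  have hps : p s = p (s + m) := by rw [show s + m = t by omega]; exact heq
  have f := fun u => D (p u) (p (u+1))
  have hedge1 : ∀ u, u < s → D (p' u) (p' (u+1)) = D (p u) (p (u+1)) := by
    intro u hu
    simp only [hp']
    rw [if_pos (by omega), if_pos (by omega)]
  have hedge2 : ∀ u, s ≤ u → u < k' → D (p' u) (p' (u+1)) = D (p (u+m)) (p (u+m+1)) := by
    intro u hu huk
    simp only [hp']
    rcases eq_or_lt_of_le hu with h | h
    · rw [if_pos (by omega), if_neg (by omega), ← h, hps,
        show s + 1 + m = s + m + 1 by omega]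
    · rw [if_neg (by omega), if_neg (by omega), show u + 1 + m = u + m + 1 by omega]
  have hsplit : pw D p n = pw D p' k' + pw D (fun u => p (s + u)) m := by
    rw [pw, pw, pw]
    rw [← Finset.sum_range_add_sum_Ico (fun u => D (p' u) (p' (u+1))) hsk']
    have e1 : ∑ u ∈ Finset.range s, D (p' u) (p' (u+1))
        = ∑ u ∈ Finset.range s, D (p u) (p (u+1)) :=
      Finset.sum_congr rfl fun u hu => hedge1 u (Finset.mem_range.mp hu)
    have e2 : ∑ u ∈ Finset.Ico s k', D (p' u) (p' (u+1))
        = ∑ v ∈ Finset.Ico t n, D (p v) (p (v+1)) := by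
      rw [Finset.sum_Ico_eq_sum_range, Finset.sum_Ico_eq_sum_range,
        show n - t = k' - s by omega]
      refine Finset.sum_congr rfl fun u hu => ?_
      have hu' := Finset.mem_range.mp hu
      rw [hedge2 (s + u) (by omega) (by omega), show s + u + m = t + u by omega]
    have e3 : ∑ u ∈ Finset.range m, D (p (s+u)) (p (s+(u+1)))
        = ∑ u ∈ Finset.Ico s t, D (p u) (p (u+1)) := by
      rw [Finset.sum_Ico_eq_sum_range, show t - s = m from rfl]
      refine Finset.sum_congr rfl fun u hu => ?_
      rw [show s + (u + 1) = s + u + 1 by omega]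
    rw [e1, e2, e3,
      ← Finset.sum_range_add_sum_Ico (fun u => D (p u) (p (u+1))) (show s ≤ n by omega),
      ← Finset.sum_Ico_consecutive (fun u => D (p u) (p (u+1))) (le_of_lt hst) htn]
    abel
  have hcyc : pw D (fun u => p (s + u)) m ≤ 0 := cycle_le_zero hD p s m hm1 hmn hps
  have hp'0 : p' 0 = i := by
    simp only [hp', if_pos (Nat.zero_le s)]; exact hp0
  have hp'k : p' k' = j := by
    simp only [hp']
    rcases eq_or_lt_of_le hsk' with h | h
    · rw [if_pos (by omega), ← h, hps, show s + m = n by omega, hpn]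
    · rw [if_neg (by omega), hkm, hpn]
  calc pw D p n = pw D p' k' + pw D (fun u => p (s + u)) m := hsplit
    _ ≤ pw D p' k' + 0 := add_le_add_right hcyc _
    _ = pw D p' k' := add_zero _
    _ ≤ tpow D k' (p' 0) (p' k') := pw_le_tpow D k' p'
    _ = tpow D k' i j := by rw [hp'0, hp'k]
    _ ≤ kstar D i j := Finset.le_sup (f := fun k => tpow D k i j)
        (Finset.mem_range.mpr (by omega))

lemma tpow_n_le_kstar {D : Matrix (Fin n) (Fin n) (WithBot ℝ)} (hD : TrOp D ≤ 0)
    (i j : Fin n) : tpow D n i j ≤ kstar D i j := by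
  refine tpow_le_of_paths D n i j _ fun p hp0 hpn => ?_
  obtain ⟨a, b, hab, heq⟩ := Fintype.exists_ne_map_eq_of_card_lt
    (fun a : Fin (n+1) => p (a : ℕ)) (by simp)
  have hne : (a : ℕ) ≠ (b : ℕ) := fun h => hab (Fin.ext h)
  rcases lt_or_gt_of_ne hne with hlt | hlt
  · exact splice_le hD p i j hp0 hpn a b hlt (Nat.lt_succ_iff.mp b.isLt) heq
  · exact splice_le hD p i j hp0 hpn b a hlt (Nat.lt_succ_iff.mp a.isLt) heq.symm


lemma tpow_le_kstar_of_le {D : Matrix (Fin n) (Fin n) (WithBot ℝ)} (hD : TrOp D ≤ 0)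
    {m : ℕ} (hm : m ≤ n) (i j : Fin n) : tpow D m i j ≤ kstar D i j := by
  rcases lt_or_eq_of_le hm with h | h
  · exact Finset.le_sup (f := fun k => tpow D k i j) (Finset.mem_range.mpr h)
  · subst h; exact tpow_n_le_kstar hD i j

lemma tmul_kstar_le {D : Matrix (Fin n) (Fin n) (WithBot ℝ)} (hD : TrOp D ≤ 0) (hn : 0 < n)
    (i j : Fin n) : tmul D (kstar D) i j ≤ kstar D i j := by
  refine Finset.sup_le fun k _ => ?_
  show D i k + kstar D k j ≤ kstar D i j
  rw [show kstar D k j = (Finset.range n).sup (fun m => tpow D m k j) from rfl,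
    add_fsup _ (Finset.nonempty_range_iff.mpr (by omega))]
  refine Finset.sup_le fun m hm => ?_
  calc D i k + tpow D m k j
      ≤ tpow D (m+1) i j := Finset.le_sup (f := fun k => D i k + tpow D m k j) (Finset.mem_univ k)
    _ ≤ kstar D i j := tpow_le_kstar_of_le hD (Finset.mem_range.mp hm) i j

lemma mulVec_mono_mat {A B : Matrix (Fin n) (Fin n) (WithBot ℝ)} (h : ∀ i j, A i j ≤ B i j)
    (x : Fin n → WithBot ℝ) (i : Fin n) : mulVec A x i ≤ mulVec B x i :=
  Finset.sup_mono_fun fun j _ => add_le_add_left (h i j) _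

lemma kstar_absorb {D : Matrix (Fin n) (Fin n) (WithBot ℝ)} (hD : TrOp D ≤ 0) (hn : 0 < n)
    (q : Fin n → WithBot ℝ) (i : Fin n) :
    mulVec D (mulVec (kstar D) q) i ≤ mulVec (kstar D) q i := by
  have : NeZero n := ⟨by omega⟩
  rw [← mulVec_tmul]
  exact mulVec_mono_mat (tmul_kstar_le hD hn) q i

lemma kstar_diag {D : Matrix (Fin n) (Fin n) (WithBot ℝ)} (hn : 0 < n) (i : Fin n) :
    (0 : WithBot ℝ) ≤ kstar D i i := by
  calc (0 : WithBot ℝ) = tpow D 0 i i := by simp [tpow, tId]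
    _ ≤ kstar D i i := Finset.le_sup (f := fun k => tpow D k i i)
        (Finset.mem_range.mpr (by omega))

lemma tpow_mulVec_le {D : Matrix (Fin n) (Fin n) (WithBot ℝ)} [NeZero n]
    {x : Fin n → WithBot ℝ} (hx : ∀ i, mulVec D x i ≤ x i) :
    ∀ (m : ℕ) (i : Fin n), mulVec (tpow D m) x i ≤ x i := by
  intro m
  induction m with
  | zero =>
    intro i
    refine Finset.sup_le fun j _ => ?_
    show tId i j + x j ≤ x i
    by_cases h : i = j
    · subst h; simp [tId]
    · simp [tId, h, WithBot.bot_add]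
  | succ m ih =>
    intro i
    show mulVec (tmul D (tpow D m)) x i ≤ x i
    rw [mulVec_tmul]
    calc mulVec D (mulVec (tpow D m) x) i ≤ mulVec D x i := mulVec_mono D ih i
      _ ≤ x i := hx i

lemma kstar_mulVec_eq {D : Matrix (Fin n) (Fin n) (WithBot ℝ)} (hn : 0 < n)
    {x : Fin n → WithBot ℝ} (hx : ∀ i, mulVec D x i ≤ x i) (i : Fin n) :
    mulVec (kstar D) x i = x i := by
  have : NeZero n := ⟨by omega⟩
  refine le_antisymm ?_ ?_
  · refine Finset.sup_le fun j _ => ?_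
    show kstar D i j + x j ≤ x i
    rw [show kstar D i j = (Finset.range n).sup (fun m => tpow D m i j) from rfl,
      fsup_add _ (Finset.nonempty_range_iff.mpr (by omega))]
    refine Finset.sup_le fun m _ => ?_
    calc tpow D m i j + x j
        ≤ mulVec (tpow D m) x i := Finset.le_sup (f := fun j => tpow D m i j + x j)
          (Finset.mem_univ j)
      _ ≤ x i := tpow_mulVec_le hx m i
  · calc x i = 0 + x i := (zero_add _).symm
      _ ≤ kstar D i i + x i := add_le_add_left (kstar_diag hn i) _
      _ ≤ mulVec (kstar D) x i := Finset.le_sup (f := fun j => kstar D i j + x j)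
          (Finset.mem_univ i)



lemma ne_bot_of_le {a b : WithBot ℝ} (ha : a ≠ ⊥) (h : a ≤ b) : b ≠ ⊥ :=
  fun hb => ha (le_bot_iff.mp (hb ▸ h))

lemma tinv_ne_bot {a : WithBot ℝ} (ha : a ≠ ⊥) : tinv a ≠ ⊥ := by
  obtain ⟨r, hr⟩ := WithBot.ne_bot_iff_exists.mp ha
  rw [← hr, tinv_coe]
  exact WithBot.coe_ne_bot

lemma cdot_ones_left {n : ℕ} (v : Fin n → WithBot ℝ) :
    cdot (onesV n) v = Finset.univ.sup v := by
  unfold cdot onesV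
  refine Finset.sup_congr rfl fun i _ => ?_
  rw [tinv_zero, zero_add]

lemma cdot_ones_right {n : ℕ} (v : Fin n → WithBot ℝ) :
    cdot v (onesV n) = Finset.univ.sup fun i => tinv (v i) := by
  unfold cdot onesV
  refine Finset.sup_congr rfl fun i _ => ?_
  rw [add_zero]

lemma mulVec_const_add {n : ℕ} [NeZero n] (A : Matrix (Fin n) (Fin n) (WithBot ℝ)) (α : ℝ)
    (v : Fin n → WithBot ℝ) (i : Fin n) :
    mulVec A (fun j => (α : WithBot ℝ) + v j) i = (α : WithBot ℝ) + mulVec A v i := by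
  show (Finset.univ.sup fun j => A i j + ((α : WithBot ℝ) + v j))
      = (α : WithBot ℝ) + Finset.univ.sup fun j => A i j + v j
  rw [add_fsup _ Finset.univ_nonempty]
  exact Finset.sup_congr rfl fun j _ => (add_left_comm _ _ _)


end MaxPlus

open MaxPlus

/-- minimization of the span seminorm of `y = C x` subject to `D x ≤ x`. -/
theorem stmt_7 {n : ℕ} (C D : Matrix (Fin n) (Fin n) (WithBot ℝ))
    (hC : (∀ i, ∃ j, C i j ≠ ⊥) ∧ (∀ j, ∃ i, C i j ≠ ⊥))
    (hD : TrOp D ≤ 0)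
    (Δ : WithBot ℝ)
    (hΔ : Δ = cdot (mulVec (tmul C (kstar D))
        (fun j => tinv (cdot (onesV n) (fun i => tmul C (kstar D) i j)))) (onesV n)) :
    (∀ x : Fin n → WithBot ℝ, Reg x → (∀ i, mulVec D x i ≤ x i) →
        Δ ≤ cdot (onesV n) (mulVec C x) + cdot (mulVec C x) (onesV n)) ∧
      ∀ α : ℝ,
        Reg (fun j => (α : WithBot ℝ) + mulVec (kstar D)
            (fun r => tinv (cdot (onesV n) (fun i => tmul C (kstar D) i r))) j) ∧
        (∀ i, mulVec D (fun j => (α : WithBot ℝ) + mulVec (kstar D)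
              (fun r => tinv (cdot (onesV n) (fun i' => tmul C (kstar D) i' r))) j) i
            ≤ (α : WithBot ℝ) + mulVec (kstar D)
              (fun r => tinv (cdot (onesV n) (fun i' => tmul C (kstar D) i' r))) i) ∧
        cdot (onesV n) (mulVec C (fun j => (α : WithBot ℝ) + mulVec (kstar D)
              (fun r => tinv (cdot (onesV n) (fun i => tmul C (kstar D) i r))) j))
            + cdot (mulVec C (fun j => (α : WithBot ℝ) + mulVec (kstar D)
              (fun r => tinv (cdot (onesV n) (fun i => tmul C (kstar D) i r))) j)) (onesV n)
          = Δ := by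
  rcases Nat.eq_zero_or_pos n with hn | hn
  · subst hn
    have hz : ∀ v w : Fin 0 → WithBot ℝ, cdot v w = ⊥ := by
      intro v w; simp [cdot]
    constructor
    · intro x _ _
      rw [hΔ, hz]
      exact bot_le
    · intro α
      refine ⟨fun i => i.elim0, fun i => i.elim0, ?_⟩
      rw [hΔ, hz, hz, hz, WithBot.bot_add]
  · have hnz : NeZero n := ⟨by omega⟩
    set S := tmul C (kstar D) with hS
    set q : Fin n → WithBot ℝ := fun r => tinv (cdot (onesV n) (fun i => S i r)) with hq
    set u := mulVec (kstar D) q with hu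
    set w := mulVec S q with hw
    -- basic regularity facts
    have hSge : ∀ i j, C i j ≤ S i j := by
      intro i j
      calc C i j = C i j + 0 := (add_zero _).symm
        _ ≤ C i j + kstar D j j := add_le_add_right (kstar_diag hn j) _
        _ ≤ S i j := Finset.le_sup (f := fun k => C i k + kstar D k j) (Finset.mem_univ j)
    have hSrow : ∀ i, ∃ j, S i j ≠ ⊥ := fun i =>
      (hC.1 i).imp fun j hj => ne_bot_of_le hj (hSge i j)
    have hMne : ∀ r, (Finset.univ.sup fun i => S i r) ≠ ⊥ := by
      intro r
      obtain ⟨i, hi⟩ := (hC.2 r).imp fun i hi => ne_bot_of_le hi (hSge i r)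
      exact ne_bot_of_le hi (Finset.le_sup (f := fun i' => S i' r) (Finset.mem_univ i))
    have hqdef : ∀ r, q r = tinv (Finset.univ.sup fun i => S i r) := by
      intro r
      rw [hq]
      simp only
      rw [cdot_ones_left]
    have hqne : ∀ r, q r ≠ ⊥ := fun r => (hqdef r) ▸ tinv_ne_bot (hMne r)
    have hMq : ∀ r, (Finset.univ.sup fun i => S i r) + q r = 0 := by
      intro r
      obtain ⟨m, hm⟩ := WithBot.ne_bot_iff_exists.mp (hMne r)
      rw [hqdef r, ← hm, tinv_coe, ← WithBot.coe_add]
      norm_num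
    have hSwle : ∀ i r, S i r + q r ≤ w i :=
      fun i r => Finset.le_sup (f := fun r => S i r + q r) (Finset.mem_univ r)
    have hwle : ∀ i, w i ≤ 0 := by
      intro i
      refine Finset.sup_le fun r _ => ?_
      calc S i r + q r ≤ (Finset.univ.sup fun i' => S i' r) + q r :=
            add_le_add_left (Finset.le_sup (f := fun i' => S i' r) (Finset.mem_univ i)) _
        _ = 0 := hMq r
    have hwne : ∀ i, w i ≠ ⊥ := by
      intro i
      obtain ⟨j, hj⟩ := hSrow i
      exact ne_bot_of_le (WithBot.add_ne_bot.mpr ⟨hj, hqne j⟩) (hSwle i j)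
    have hwsup : Finset.univ.sup w = 0 := by
      refine le_antisymm (Finset.sup_le fun i _ => hwle i) ?_
      obtain ⟨i0, _, hi0⟩ := Finset.exists_mem_eq_sup Finset.univ Finset.univ_nonempty
        (fun i => S i (⟨0, hn⟩ : Fin n))
      calc (0 : WithBot ℝ) = (Finset.univ.sup fun i => S i (⟨0, hn⟩ : Fin n)) + q ⟨0, hn⟩ :=
            (hMq _).symm
        _ = S i0 ⟨0, hn⟩ + q ⟨0, hn⟩ := by rw [← hi0]
        _ ≤ w i0 := hSwle i0 _
        _ ≤ Finset.univ.sup w := Finset.le_sup (Finset.mem_univ i0)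
    have hune : ∀ j, u j ≠ ⊥ := by
      intro j
      refine ne_bot_of_le (hqne j) ?_
      calc q j = 0 + q j := (zero_add _).symm
        _ ≤ kstar D j j + q j := add_le_add_left (kstar_diag hn j) _
        _ ≤ u j := Finset.le_sup (f := fun k => kstar D j k + q k) (Finset.mem_univ j)
    have hCu : mulVec C u = w := by
      rw [hw, hu, hS, mulVec_tmul]
    have hΔ' : Δ = Finset.univ.sup fun i => tinv (w i) := by
      rw [hΔ, cdot_ones_right]
    constructor
    · -- lower bound
      intro x hx hDx
      have hkx : mulVec (kstar D) x = x := funext (kstar_mulVec_eq hn hDx)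
      have hSx : mulVec S x = mulVec C x := by rw [hS, mulVec_tmul, hkx]
      rw [hΔ', cdot_ones_left, cdot_ones_right]
      refine Finset.sup_le fun i _ => ?_
      obtain ⟨wi, hwi⟩ := WithBot.ne_bot_iff_exists.mp (hwne i)
      set T := Finset.univ.sup (fun r => (Finset.univ.sup fun i' => S i' r) + x r) with hT
      have hTne : T ≠ ⊥ := by
        refine ne_bot_of_le (WithBot.add_ne_bot.mpr ⟨hMne ⟨0, hn⟩, hx ⟨0, hn⟩⟩) ?_
        exact Finset.le_sup (f := fun r => (Finset.univ.sup fun i' => S i' r) + x r)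
          (Finset.mem_univ (⟨0, hn⟩ : Fin n))
      obtain ⟨t, ht⟩ := WithBot.ne_bot_iff_exists.mp hTne
      have h1 : T ≤ Finset.univ.sup (mulVec C x) := by
        refine Finset.sup_le fun r _ => ?_
        obtain ⟨i0, _, hi0⟩ := Finset.exists_mem_eq_sup Finset.univ Finset.univ_nonempty
          (fun i' => S i' r)
        calc (Finset.univ.sup fun i' => S i' r) + x r = S i0 r + x r := by rw [← hi0]
          _ ≤ mulVec S x i0 := Finset.le_sup (f := fun r => S i0 r + x r) (Finset.mem_univ r)
          _ = mulVec C x i0 := by rw [hSx]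
          _ ≤ Finset.univ.sup (mulVec C x) := Finset.le_sup (Finset.mem_univ i0)
      have h2 : mulVec C x i ≤ (wi : WithBot ℝ) + T := by
        rw [← hSx]
        refine Finset.sup_le fun r _ => ?_
        have hSr : S i r ≤ (wi : WithBot ℝ) + Finset.univ.sup fun i' => S i' r := by
          calc S i r = S i r + 0 := (add_zero _).symm
            _ = S i r + ((Finset.univ.sup fun i' => S i' r) + q r) := by rw [hMq r]
            _ = (S i r + q r) + (Finset.univ.sup fun i' => S i' r) := by
                rw [add_comm (Finset.univ.sup fun i' => S i' r) (q r), ← add_assoc]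
            _ ≤ (wi : WithBot ℝ) + Finset.univ.sup fun i' => S i' r :=
                add_le_add_left (hwi ▸ hSwle i r) _
        calc S i r + x r ≤ ((wi : WithBot ℝ) + Finset.univ.sup fun i' => S i' r) + x r :=
              add_le_add_left hSr _
          _ = (wi : WithBot ℝ) + ((Finset.univ.sup fun i' => S i' r) + x r) := add_assoc _ _ _
          _ ≤ (wi : WithBot ℝ) + T :=
              add_le_add_right (Finset.le_sup
                (f := fun r => (Finset.univ.sup fun i' => S i' r) + x r) (Finset.mem_univ r)) _
      have hyne : mulVec C x i ≠ ⊥ := by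
        obtain ⟨j0, hj0⟩ := hC.1 i
        exact ne_bot_of_le (WithBot.add_ne_bot.mpr ⟨hj0, hx j0⟩)
          (Finset.le_sup (f := fun j => C i j + x j) (Finset.mem_univ j0))
      have h3 : tinv ((wi : WithBot ℝ) + T) ≤ tinv (mulVec C x i) := tinv_le_tinv hyne h2
      rw [← hwi, tinv_coe]
      calc ((-wi : ℝ) : WithBot ℝ) = (t : WithBot ℝ) + ((-(wi + t) : ℝ) : WithBot ℝ) := by
            rw [← WithBot.coe_add]
            norm_num
        _ = T + tinv ((wi : WithBot ℝ) + T) := by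
            have htv : tinv ((wi : WithBot ℝ) + (t : WithBot ℝ)) = ((-(wi + t) : ℝ) : WithBot ℝ) := by
              rw [← WithBot.coe_add, tinv_coe]
            rw [← ht, htv]
        _ ≤ Finset.univ.sup (mulVec C x) + Finset.univ.sup fun i' => tinv (mulVec C x i') :=
            add_le_add h1 (le_trans h3
              (Finset.le_sup (f := fun i' => tinv (mulVec C x i')) (Finset.mem_univ i)))
    · -- attainment
      intro α
      have hDux : ∀ i, mulVec D u i ≤ u i := by
        intro i
        rw [hu]
        exact kstar_absorb hD hn q i
      refine ⟨?_, ?_, ?_⟩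
      · intro j
        exact WithBot.add_ne_bot.mpr ⟨WithBot.coe_ne_bot, hune j⟩
      · intro i
        rw [mulVec_const_add]
        exact add_le_add_right (hDux i) _
      · have hCx : mulVec C (fun j => (α : WithBot ℝ) + u j) = fun i => (α : WithBot ℝ) + w i := by
          funext i
          rw [mulVec_const_add, hCu]
        rw [hCx, cdot_ones_left, cdot_ones_right]
        have e1 : (Finset.univ.sup fun i => (α : WithBot ℝ) + w i) = (α : WithBot ℝ) := by
          rw [← add_fsup _ Finset.univ_nonempty, hwsup, add_zero]
        have e2 : (Finset.univ.sup fun i => tinv ((α : WithBot ℝ) + w i))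
            = ((-α : ℝ) : WithBot ℝ) + Δ := by
          rw [hΔ']
          calc (Finset.univ.sup fun i => tinv ((α : WithBot ℝ) + w i))
              = Finset.univ.sup fun i => ((-α : ℝ) : WithBot ℝ) + tinv (w i) :=
                Finset.sup_congr rfl fun i _ => tinv_coe_add α (w i)
            _ = ((-α : ℝ) : WithBot ℝ) + Finset.univ.sup fun i => tinv (w i) :=
                (add_fsup _ Finset.univ_nonempty _ _).symm
        rw [e1, e2, ← add_assoc, ← WithBot.coe_add]
        norm_num
end
end
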